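/- arXiv:2102.11360 — 4 statements merged into one kernel-verified Lean document; each statement's English description precedes it below -/
import Mathlib

section
/- For any positive integer k, any n-node graph with at least 2k·n edges contains at least k·n distinct edge-simple alternating k-paths. -/
open SimpleGraph

/-- `AltSeq wt l` : in the edge sequence `l` (1-based positions `i+1` for list index `i`),
every even-numbered edge is strictly heavier than the adjacent odd-numbered edges. -/
def AltSeq {V : Type*} (wt : Sym2 V → ℝ) (l : List (Sym2 V)) : Prop :=
  ∀ (i : ℕ) (hi : i < l.length), i % 2 = 1 →
    wt (l.get ⟨i - 1, Nat.lt_of_le_of_lt (Nat.sub_le i 1) hi⟩) < wt (l.get ⟨i, hi⟩) ∧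
    ∀ (hi' : i + 1 < l.length), wt (l.get ⟨i + 1, hi'⟩) < wt (l.get ⟨i, hi⟩)

namespace AltProofAux

/-- Lists of a fixed length over a finite type form a finite set. -/
lemma list_len_finite (α : Type*) [Finite α] : ∀ m : ℕ, {l : List α | l.length = m}.Finite
  | 0 => by
      convert Set.finite_singleton ([] : List α)
      ext l; simp [List.length_eq_zero_iff]
  | (m + 1) => by
      have hm := list_len_finite α m
      have hsub : {l : List α | l.length = m + 1} ⊆
          (fun p : α × List α => p.1 :: p.2) '' (Set.univ ×ˢ {l : List α | l.length = m}) := by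
        rintro (_ | ⟨a, l⟩) hl
        · simp at hl
        · exact ⟨(a, l), ⟨trivial, by simpa using hl⟩, rfl⟩
      exact ((Set.finite_univ.prod hm).image _).subset hsub

variable {V : Type*} [Fintype V] [DecidableEq V]

/-- Extraction of a small set `S` of "locally extremal" edges: at most one per vertex,
such that every vertex incident to an edge of `s` has a `g`-maximal edge of `s` inside `S`. -/
lemma extract (g : Sym2 V → ℝ) (s : Finset (Sym2 V)) (hg : Set.InjOn g ↑s) :
    ∃ S : Finset (Sym2 V), S ⊆ s ∧ S.card ≤ Fintype.card V ∧
      ∀ v : V, ∀ e ∈ s, v ∈ e → ∃ f ∈ S, v ∈ f ∧ ∀ f' ∈ s, v ∈ f' → g f' ≤ g f := by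
  classical
  set S := s.filter (fun e => ∃ v, v ∈ e ∧ ∀ f ∈ s, v ∈ f → g f ≤ g e) with hS
  refine ⟨S, Finset.filter_subset _ _, ?_, ?_⟩
  · have hch : ∀ e ∈ S, ∃ v, v ∈ e ∧ ∀ f ∈ s, v ∈ f → g f ≤ g e :=
      fun e he => (Finset.mem_filter.mp he).2
    choose ϕ hϕ1 hϕ2 using hch
    rcases S.eq_empty_or_nonempty with hSe | hSne
    · simp [hSe]
    · obtain ⟨e₀, he₀⟩ := hSne
      haveI : Nonempty V := ⟨ϕ e₀ he₀⟩
      have hinj : Set.InjOn (fun e => if h : e ∈ S then ϕ e h else Classical.arbitrary V) ↑S := by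
        intro e₁ h₁ e₂ h₂ heq
        have h₁' : e₁ ∈ S := Finset.mem_coe.mp h₁
        have h₂' : e₂ ∈ S := Finset.mem_coe.mp h₂
        simp only [dif_pos h₁', dif_pos h₂'] at heq
        have hs₁ : e₁ ∈ s := Finset.filter_subset _ _ h₁'
        have hs₂ : e₂ ∈ s := Finset.filter_subset _ _ h₂'
        have hv₁ : ϕ e₂ h₂' ∈ e₁ := heq ▸ hϕ1 e₁ h₁'
        have hv₂ : ϕ e₁ h₁' ∈ e₂ := heq ▸ hϕ1 e₂ h₂'
        have le₁ : g e₁ ≤ g e₂ := hϕ2 e₂ h₂' e₁ hs₁ hv₁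
        have le₂ : g e₂ ≤ g e₁ := hϕ2 e₁ h₁' e₂ hs₂ (heq ▸ hv₂)
        exact hg (Finset.mem_coe.mpr hs₁) (Finset.mem_coe.mpr hs₂) (le_antisymm le₁ le₂)
      have hcard := Finset.card_le_card_of_injOn (s := S) (t := (Finset.univ : Finset V))
        (fun e => if h : e ∈ S then ϕ e h else Classical.arbitrary V)
        (fun a _ => Finset.mem_univ _) hinj
      simpa using hcard
  · intro v e he hve
    obtain ⟨f, hf, hmax⟩ := Finset.exists_max_image (s.filter (fun e' => v ∈ e')) g
      ⟨e, Finset.mem_filter.mpr ⟨he, hve⟩⟩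
    have hfs : f ∈ s := (Finset.mem_filter.mp hf).1
    have hvf : v ∈ f := (Finset.mem_filter.mp hf).2
    have hmax' : ∀ f' ∈ s, v ∈ f' → g f' ≤ g f :=
      fun f' h1 h2 => hmax f' (Finset.mem_filter.mpr ⟨h1, h2⟩)
    exact ⟨f, Finset.mem_filter.mpr ⟨hfs, ⟨v, hvf, hmax'⟩⟩, hvf, hmax'⟩

/-- Appending an edge to an alternating list stays alternating, provided the new edge
compares correctly with the last edge of `l` (direction depending on parity). -/
lemma altseq_append (wt : Sym2 V → ℝ) (l : List (Sym2 V)) (f : Sym2 V) (hne : l ≠ [])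
    (halt : AltSeq wt l)
    (h1 : l.length % 2 = 1 → wt (l.getLast hne) < wt f)
    (h2 : l.length % 2 = 0 → wt f < wt (l.getLast hne)) :
    AltSeq wt (l ++ [f]) := by
  have hlpos : 0 < l.length := List.length_pos_iff.mpr hne
  unfold AltSeq at halt ⊢
  simp only [List.get_eq_getElem] at halt ⊢
  intro i hi hodd
  have hi' : i < l.length + 1 := by simpa using hi
  constructor
  · rcases (by omega : i < l.length ∨ i = l.length) with hc | hc
    · have e1 : (l ++ [f])[i]'hi = l[i]'hc := List.getElem_append_left hc
      have e2 : (l ++ [f])[i - 1]'(Nat.lt_of_le_of_lt (Nat.sub_le i 1) hi)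
          = l[i - 1]'(Nat.lt_of_le_of_lt (Nat.sub_le i 1) hc) := List.getElem_append_left _
      rw [e1, e2]
      exact (halt i hc hodd).1
    · have e1 : (l ++ [f])[i]'hi = f := List.getElem_concat_length hc _
      have hlt : i - 1 < l.length := by omega
      have e2 : (l ++ [f])[i - 1]'(Nat.lt_of_le_of_lt (Nat.sub_le i 1) hi)
          = l[i - 1]'hlt := List.getElem_append_left _
      have e3 : l[i - 1]'hlt = l.getLast hne := by
        rw [List.getLast_eq_getElem]
        congr 1
        omega
      rw [e1, e2, e3]
      exact h1 (by omega)
  · intro hif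
    have hif' : i + 1 < l.length + 1 := by simpa using hif
    rcases (by omega : i + 1 < l.length ∨ i + 1 = l.length) with hc | hc
    · have hil : i < l.length := by omega
      have e1 : (l ++ [f])[i + 1]'hif = l[i + 1]'hc := List.getElem_append_left hc
      have e2 : (l ++ [f])[i]'hi = l[i]'hil := List.getElem_append_left _
      rw [e1, e2]
      exact (halt i hil hodd).2 hc
    · have hil : i < l.length := by omega
      have e1 : (l ++ [f])[i + 1]'hif = f := List.getElem_concat_length hc _
      have e2 : (l ++ [f])[i]'hi = l[i]'hil := List.getElem_append_left _
      have e3 : l[i]'hil = l.getLast hne := by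
        rw [List.getLast_eq_getElem]
        congr 1
        omega
      rw [e1, e2, e3]
      exact h2 (by omega)

variable (Γ : SimpleGraph V)

/-- The start vertex of a walk belongs to the last edge of `l` when `q.edges = l.reverse`. -/
lemma end_mem_getLast {u v : V} (q : Γ.Walk v u) (l : List (Sym2 V))
    (h : q.edges = l.reverse) (hl : l ≠ []) : v ∈ l.getLast hl := by
  cases q with
  | nil =>
      exfalso
      apply hl
      have : l.reverse = [] := by simpa using h.symm
      simpa using this
  | @cons _ b _ hadj q' =>
      have h' : l.reverse = s(v, b) :: q'.edges := by
        rw [← h]; simp [Walk.edges_cons]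
      have h2 : l.getLast? = some s(v, b) := by
        rw [← List.head?_reverse, h']; rfl
      have h3 : l.getLast hl = s(v, b) := by
        have hm := List.getLast_mem_getLast? hl
        rw [h2] at hm
        exact (by simpa using hm : s(v, b) = l.getLast hl).symm
      rw [h3]
      exact Sym2.mem_mk_left v b

/-- Key existence lemma: any edge subset of size at least `j·n + 1` contains an
alternating trail with `j+1` edges. -/
lemma exists_alt (wt : Sym2 V → ℝ) (hw : Set.InjOn wt Γ.edgeSet) :
    ∀ (j : ℕ) (s : Finset (Sym2 V)), ↑s ⊆ Γ.edgeSet →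
      j * Fintype.card V + 1 ≤ s.card →
      ∃ (u v : V) (q : Γ.Walk v u) (l : List (Sym2 V)),
        q.edges = l.reverse ∧ l.length = j + 1 ∧ l.Nodup ∧ AltSeq wt l ∧
        ∀ e ∈ l, e ∈ s := by
  intro j
  induction j with
  | zero =>
      intro s hs hcard
      obtain ⟨e, he⟩ := Finset.card_pos.mp (show 0 < s.card by omega)
      have heE : e ∈ Γ.edgeSet := hs he
      revert he heE
      induction e using Sym2.ind with
      | _ a b =>
        intro he heE
        have hadj : Γ.Adj a b := Γ.mem_edgeSet.mp heE
        refine ⟨b, a, Walk.cons hadj Walk.nil, [s(a, b)], by simp, by simp, by simp, ?_, by simpa⟩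
        intro i hi hodd
        simp only [List.length_singleton] at hi
        omega
  | succ j ih =>
      intro s hs hcard
      have hwn : Set.InjOn wt ↑s := hw.mono hs
      rcases (by omega : (j + 1) % 2 = 1 ∨ (j + 1) % 2 = 0) with hpar | hpar
      · -- appended edge at 0-based index j+1, odd: it is a peak, use max edges
        obtain ⟨S, hSsub, hScard, hSmax⟩ := extract wt s hwn
        set s' := s \ S with hs'def
        have hs' : ↑s' ⊆ Γ.edgeSet := fun e he => by
          simp only [hs'def, Finset.coe_sdiff, Set.mem_diff] at he
          exact hs he.1
        have hcard' : j * Fintype.card V + 1 ≤ s'.card := by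
          have h1 : s.card - S.card ≤ s'.card := Finset.le_card_sdiff S s
          have h2 : (j + 1) * Fintype.card V = j * Fintype.card V + Fintype.card V := by ring
          omega
        obtain ⟨u, v, q, l, hql, hlen, hnd, haltl, hmem⟩ := ih s' hs' hcard'
        have hlne : l ≠ [] := by intro h; rw [h] at hlen; simp at hlen
        have hvl : v ∈ l.getLast hlne := end_mem_getLast Γ q l hql hlne
        have hlast_s' : l.getLast hlne ∈ s' := hmem _ (List.getLast_mem hlne)
        have hlast_s : l.getLast hlne ∈ s := (Finset.mem_sdiff.mp hlast_s').1
        obtain ⟨f, hfS, hvf, hfmax⟩ := hSmax v _ hlast_s hvl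
        have hfs : f ∈ s := hSsub hfS
        have hfl : f ∉ l := fun h => (Finset.mem_sdiff.mp (hmem f h)).2 hfS
        have hne_fl : f ≠ l.getLast hlne := by
          rintro rfl; exact hfl (List.getLast_mem hlne)
        have hlt : wt (l.getLast hlne) < wt f := by
          refine lt_of_le_of_ne (hfmax _ hlast_s hvl) ?_
          intro h
          exact hne_fl (hw (hs hfs) (hs hlast_s) h.symm)
        obtain ⟨w', hfe⟩ := Sym2.mem_iff_exists.mp hvf
        have hadj : Γ.Adj v w' := Γ.mem_edgeSet.mp (hfe ▸ hs hfs)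
        refine ⟨u, w', Walk.cons hadj.symm q, l ++ [f], ?_, ?_, ?_, ?_, ?_⟩
        · rw [Walk.edges_cons, hql, List.reverse_append]
          simp [hfe, Sym2.eq_swap]
        · simp [hlen]
        · refine hnd.append (List.nodup_singleton f) ?_
          intro a ha hb
          simp only [List.mem_singleton] at hb
          subst hb
          exact hfl ha
        · refine altseq_append wt l f hlne haltl (fun _ => hlt) (fun h => ?_)
          rw [hlen] at h; omega
        · intro e he
          rcases List.mem_append.mp he with h | h
          · exact (Finset.mem_sdiff.mp (hmem e h)).1
          · simp only [List.mem_singleton] at h; subst h; exact hfs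
      · -- appended edge at 0-based index j+1, even: it is a valley, use min edges
        have hwn' : Set.InjOn (fun e => -(wt e)) ↑s := fun x hx y hy h =>
          hwn hx hy (neg_injective h)
        obtain ⟨S, hSsub, hScard, hSmax⟩ := extract (fun e => -(wt e)) s hwn'
        set s' := s \ S with hs'def
        have hs' : ↑s' ⊆ Γ.edgeSet := fun e he => by
          simp only [hs'def, Finset.coe_sdiff, Set.mem_diff] at he
          exact hs he.1
        have hcard' : j * Fintype.card V + 1 ≤ s'.card := by
          have h1 : s.card - S.card ≤ s'.card := Finset.le_card_sdiff S s
          have h2 : (j + 1) * Fintype.card V = j * Fintype.card V + Fintype.card V := by ring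
          omega
        obtain ⟨u, v, q, l, hql, hlen, hnd, haltl, hmem⟩ := ih s' hs' hcard'
        have hlne : l ≠ [] := by intro h; rw [h] at hlen; simp at hlen
        have hvl : v ∈ l.getLast hlne := end_mem_getLast Γ q l hql hlne
        have hlast_s' : l.getLast hlne ∈ s' := hmem _ (List.getLast_mem hlne)
        have hlast_s : l.getLast hlne ∈ s := (Finset.mem_sdiff.mp hlast_s').1
        obtain ⟨f, hfS, hvf, hfmax⟩ := hSmax v _ hlast_s hvl
        have hfs : f ∈ s := hSsub hfS
        have hfl : f ∉ l := fun h => (Finset.mem_sdiff.mp (hmem f h)).2 hfS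
        have hne_fl : f ≠ l.getLast hlne := by
          rintro rfl; exact hfl (List.getLast_mem hlne)
        have hlt : wt f < wt (l.getLast hlne) := by
          have hle : -(wt (l.getLast hlne)) ≤ -(wt f) := hfmax _ hlast_s hvl
          have hle' : wt f ≤ wt (l.getLast hlne) := by linarith
          refine lt_of_le_of_ne hle' ?_
          intro h
          exact hne_fl (hw (hs hfs) (hs hlast_s) h)
        obtain ⟨w', hfe⟩ := Sym2.mem_iff_exists.mp hvf
        have hadj : Γ.Adj v w' := Γ.mem_edgeSet.mp (hfe ▸ hs hfs)
        refine ⟨u, w', Walk.cons hadj.symm q, l ++ [f], ?_, ?_, ?_, ?_, ?_⟩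
        · rw [Walk.edges_cons, hql, List.reverse_append]
          simp [hfe, Sym2.eq_swap]
        · simp [hlen]
        · refine hnd.append (List.nodup_singleton f) ?_
          intro a ha hb
          simp only [List.mem_singleton] at hb
          subst hb
          exact hfl ha
        · refine altseq_append wt l f hlne haltl (fun h => ?_) (fun _ => hlt)
          rw [hlen] at h; omega
        · intro e he
          rcases List.mem_append.mp he with h | h
          · exact (Finset.mem_sdiff.mp (hmem e h)).1
          · simp only [List.mem_singleton] at h; subst h; exact hfs

/-- Counting lemma: extract-and-delete gives `c` distinct alternating trails. -/
lemma count (wt : Sym2 V → ℝ) (hw : Set.InjOn wt Γ.edgeSet) (K : ℕ) :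
    ∀ (c : ℕ) (s : Finset (Sym2 V)), ↑s ⊆ Γ.edgeSet →
      K * Fintype.card V + c ≤ s.card →
      c ≤ {l : List (Sym2 V) | l.length = K + 1 ∧ l.Nodup ∧ AltSeq wt l ∧
            (∃ (u v : V) (p : Γ.Walk u v), p.edges = l) ∧ ∀ e ∈ l, e ∈ s}.ncard := by
  intro c
  induction c with
  | zero => intro s _ _; exact Nat.zero_le _
  | succ c ihc =>
      intro s hs hcard
      obtain ⟨u, v, q, l, hql, hlen, hnd, haltl, hmem⟩ :=
        exists_alt Γ wt hw K s hs (by omega)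
      have hlne : l ≠ [] := by intro h; rw [h] at hlen; simp at hlen
      set d := l.head hlne with hd
      have hdl : d ∈ l := List.head_mem hlne
      have hds : d ∈ s := hmem d hdl
      have hsub' : ↑(s.erase d) ⊆ Γ.edgeSet := fun e he =>
        hs (Finset.mem_coe.mpr (Finset.mem_of_mem_erase (Finset.mem_coe.mp he)))
      have hcard' : K * Fintype.card V + c ≤ (s.erase d).card := by
        rw [Finset.card_erase_of_mem hds]; omega
      have hc := ihc (s.erase d) hsub' hcard'
      set A' := {l : List (Sym2 V) | l.length = K + 1 ∧ l.Nodup ∧ AltSeq wt l ∧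
            (∃ (u v : V) (p : Γ.Walk u v), p.edges = l) ∧ ∀ e ∈ l, e ∈ s.erase d} with hA'
      set A := {l : List (Sym2 V) | l.length = K + 1 ∧ l.Nodup ∧ AltSeq wt l ∧
            (∃ (u v : V) (p : Γ.Walk u v), p.edges = l) ∧ ∀ e ∈ l, e ∈ s} with hA
      have hfin : {l : List (Sym2 V) | l.length = K + 1}.Finite :=
        list_len_finite (Sym2 V) (K + 1)
      have hA'fin : A'.Finite := hfin.subset (fun x hx => hx.1)
      have hAfin : A.Finite := hfin.subset (fun x hx => hx.1)
      have hlA : l ∈ A := by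
        refine ⟨hlen, hnd, haltl, ⟨u, v, q.reverse, ?_⟩, hmem⟩
        rw [Walk.edges_reverse, hql, List.reverse_reverse]
      have hlA' : l ∉ A' := by
        intro hx
        exact (Finset.notMem_erase d s) (hx.2.2.2.2 d hdl)
      have hins : insert l A' ⊆ A := by
        intro x hx
        rcases Set.mem_insert_iff.mp hx with rfl | hx
        · exact hlA
        · exact ⟨hx.1, hx.2.1, hx.2.2.1, hx.2.2.2.1,
            fun e he => Finset.mem_of_mem_erase (hx.2.2.2.2 e he)⟩
      calc c + 1 ≤ A'.ncard + 1 := by omega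
        _ = (insert l A').ncard := (Set.ncard_insert_of_notMem hlA' hA'fin).symm
        _ ≤ A.ncard := Set.ncard_le_ncard hins hAfin

end AltProofAux

/-- Any `n`-node graph with at least `2k·n` edges contains at least `k·n` distinct
edge-simple alternating `k`-paths (paths are distinguished by their edge sequences). -/
theorem stmt_1 {V : Type*} [Fintype V] [DecidableEq V]
    (Γ : SimpleGraph V) [DecidableRel Γ.Adj]
    (wt : Sym2 V → ℝ) (hw : Set.InjOn wt Γ.edgeSet)
    (k : ℕ) (hk : 0 < k)
    (hE : 2 * k * Fintype.card V ≤ Γ.edgeFinset.card) :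
    k * Fintype.card V ≤
      {l : List (Sym2 V) | l.length = k ∧ l.Nodup ∧ AltSeq wt l ∧
        ∃ (u v : V) (p : Γ.Walk u v), p.edges = l}.ncard := by
  classical
  obtain ⟨K, rfl⟩ : ∃ K, k = K + 1 := ⟨k - 1, by omega⟩
  set n := Fintype.card V with hn
  have hEsub : ↑Γ.edgeFinset ⊆ Γ.edgeSet := by
    simp [SimpleGraph.coe_edgeFinset]
  have harith : K * n + (K + 1) * n ≤ Γ.edgeFinset.card := by
    have h1 : K * n + (K + 1) * n ≤ 2 * (K + 1) * n := by nlinarith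
    omega
  have hcount := AltProofAux.count Γ wt hw K ((K + 1) * n) Γ.edgeFinset hEsub harith
  refine le_trans hcount (Set.ncard_le_ncard ?_ ?_)
  · intro l hl
    exact ⟨hl.1, hl.2.1, hl.2.2.1, hl.2.2.2.1⟩
  · exact (AltProofAux.list_len_finite (Sym2 V) (K + 1)).subset (fun l hl => hl.1)
end

section
/- Let H be a graph with a strong 2k-blocking set B with |B| ≤ f·|E(H)|. Then there exists a subgraph H' of H with |E(H')| ≥ |E(H)|/2 and a strong 2k-blocking set B' ⊆ B for H' in which every edge of H' appears in fewer than 4f blocks. -/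
open SimpleGraph

def IsStrongBlockingSet {V : Type*} (G : SimpleGraph V) (wt : Sym2 V → ℝ) (k : ℕ)
    (B : Finset (Sym2 (Sym2 V))) : Prop :=
  ∀ (v : V) (C : G.Walk v v), C.IsCycle → C.length ≤ 2 * k →
    ∃ e₁ e₂ : Sym2 V, s(e₁, e₂) ∈ B ∧ e₁ ∈ C.edges ∧ e₂ ∈ C.edges ∧
      ∀ e ∈ C.edges, e ≠ e₁ → wt e < wt e₁

open Classical in
noncomputable def blockCount {V : Type*} (B : Finset (Sym2 (Sym2 V))) (e : Sym2 V) : ℕ :=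
  (B.filter (fun b => e ∈ b)).card


lemma sum_blockCount_le {V : Type*} [DecidableEq V] (B : Finset (Sym2 (Sym2 V)))
    (E : Finset (Sym2 V)) : ∑ e ∈ E, blockCount B e ≤ 2 * B.card := by
  classical
  have hbc : ∀ e : Sym2 V, blockCount B e = ∑ b ∈ B, if e ∈ b then 1 else 0 := by
    intro e
    rw [blockCount, Finset.card_filter]
    exact Finset.sum_congr rfl fun b _ => by congr
  calc ∑ e ∈ E, blockCount B e
      = ∑ e ∈ E, ∑ b ∈ B, if e ∈ b then 1 else 0 := Finset.sum_congr rfl fun e _ => hbc e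
    _ = ∑ b ∈ B, ∑ e ∈ E, if e ∈ b then 1 else 0 := Finset.sum_comm
    _ = ∑ b ∈ B, (E.filter (fun e => e ∈ b)).card := by
        refine Finset.sum_congr rfl fun b _ => ?_
        rw [Finset.card_filter]
    _ ≤ ∑ _b ∈ B, 2 := by
        refine Finset.sum_le_sum fun b _ => ?_
        induction b using Sym2.ind with
        | _ x y =>
          have hss : E.filter (fun e => e ∈ s(x, y)) ⊆ {x, y} := by
            intro e he
            simp only [Finset.mem_filter, Sym2.mem_iff] at he
            simp [he.2]
          calc (E.filter (fun e => e ∈ s(x, y))).card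
              ≤ ({x, y} : Finset (Sym2 V)).card := Finset.card_le_card hss
            _ ≤ 2 := Finset.card_le_two
    _ = 2 * B.card := by rw [Finset.sum_const, smul_eq_mul, mul_comm]

set_option maxHeartbeats 1000000 in
/-- If `H` has a strong `2k`-blocking set `B` with `|B| ≤ f·|E(H)|`, then some subgraph
`H'` of `H` retaining at least half the edges has a strong `2k`-blocking set `B' ⊆ B` in
which every edge of `H'` appears in fewer than `4f` blocks. -/
theorem stmt_6 {V : Type*} [Fintype V] [DecidableEq V]
    (H : SimpleGraph V) [DecidableRel H.Adj]
    (wt : Sym2 V → ℝ) (hw : Set.InjOn wt H.edgeSet)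
    (k f : ℕ) (hk : 0 < k) (hf : 0 < f)
    (B : Finset (Sym2 (Sym2 V)))
    (hB : IsStrongBlockingSet H wt k B)
    (hBcard : B.card ≤ f * H.edgeFinset.card) :
    ∃ (H' : SimpleGraph V) (B' : Finset (Sym2 (Sym2 V))),
      H' ≤ H ∧
      H.edgeFinset.card ≤ 2 * H'.edgeSet.ncard ∧
      B' ⊆ B ∧
      IsStrongBlockingSet H' wt k B' ∧
      ∀ e ∈ H'.edgeSet, blockCount B' e < 4 * f := by
  classical
  -- bad edges: blockCount ≥ 4f
  set bad : Finset (Sym2 V) := H.edgeFinset.filter (fun e => 4 * f ≤ blockCount B e) with hbad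
  set H' : SimpleGraph V := H.deleteEdges ↑bad with hH'
  have hle : H' ≤ H := H.deleteEdges_le _
  have hES : H'.edgeSet = ↑(H.edgeFinset \ bad) := by
    rw [hH', edgeSet_deleteEdges, Finset.coe_sdiff, SimpleGraph.coe_edgeFinset]
  -- double counting
  have hsum : ∑ e ∈ H.edgeFinset, blockCount B e ≤ 2 * B.card :=
    sum_blockCount_le B H.edgeFinset
  have hbadcard : 2 * bad.card ≤ H.edgeFinset.card := by
    have h1 : 4 * f * bad.card ≤ ∑ e ∈ bad, blockCount B e := by
      calc 4 * f * bad.card = ∑ _e ∈ bad, 4 * f := by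
            rw [Finset.sum_const, smul_eq_mul, mul_comm]
        _ ≤ ∑ e ∈ bad, blockCount B e :=
            Finset.sum_le_sum fun e he => (Finset.mem_filter.mp he).2
    have h2 : ∑ e ∈ bad, blockCount B e ≤ ∑ e ∈ H.edgeFinset, blockCount B e :=
      Finset.sum_le_sum_of_subset (Finset.filter_subset _ _)
    have h3 : 4 * f * bad.card ≤ 2 * (f * H.edgeFinset.card) := by
      calc 4 * f * bad.card ≤ 2 * B.card := h1.trans (h2.trans hsum)
        _ ≤ 2 * (f * H.edgeFinset.card) := by omega
    nlinarith
  have hgoodcard : H.edgeFinset.card ≤ 2 * (H.edgeFinset \ bad).card := by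
    have := Finset.card_sdiff_of_subset (show bad ⊆ H.edgeFinset from Finset.filter_subset _ _)
    omega
  refine ⟨H', B, hle, ?_, Finset.Subset.refl B, ?_, ?_⟩
  · rw [hES, Set.ncard_coe_finset]; exact hgoodcard
  · intro v C hC hlen
    have hsub : ∀ e ∈ C.edges, e ∈ H.edgeSet := fun e he =>
      (SimpleGraph.edgeSet_mono hle) (C.edges_subset_edgeSet he)
    obtain ⟨e₁, e₂, hmem, h1, h2, hmax⟩ :=
      hB v (C.transfer H hsub) (hC.transfer hsub)
        (by rw [Walk.length_transfer]; exact hlen)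
    rw [Walk.edges_transfer] at h1 h2 hmax
    exact ⟨e₁, e₂, hmem, h1, h2, hmax⟩
  · intro e he
    rw [hES] at he
    simp only [Finset.coe_sdiff, Set.mem_diff, Finset.mem_coe, hbad,
      Finset.mem_filter, not_and, not_le] at he
    exact he.2 he.1
end

section
/- The graph H output by the fault-tolerant greedy algorithm is an f-edge-fault-tolerant (2k-1)-spanner of G: for every F ⊆ E(G) with |F| ≤ f and every pair of vertices u, v, d_{H∖F}(u,v) ≤ (2k-1)·d_{G∖F}(u,v). -/
open SimpleGraph
open scoped NNReal ENNReal

/-- Weighted shortest-path distance (`⊤` if there is no walk). -/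
noncomputable def wdist {V : Type*} (G : SimpleGraph V) (wt : Sym2 V → ℝ≥0) (u v : V) :
    ℝ≥0∞ :=
  ⨅ (p : G.Walk u v), (p.edges.map (fun e => (wt e : ℝ≥0∞))).sum

open Classical in
/-- The fault-tolerant greedy algorithm: process the edges of the list in order, starting
from the partial spanner edge set `S`, adding an edge `e = s(x,y)` iff some fault set `F`
of at most `f` edges makes the current distance from `x` to `y` exceed `(2k-1)·wt e`. -/
noncomputable def greedyEFT {V : Type*} (wt : Sym2 V → ℝ≥0) (f k : ℕ) :
    List (Sym2 V) → Set (Sym2 V) → Set (Sym2 V)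
  | [], S => S
  | e :: L, S =>
    greedyEFT wt f k L
      (if ∃ F : Finset (Sym2 V), F.card ≤ f ∧
            ∀ x y : V, e = s(x, y) →
              ((2 * k - 1 : ℕ) : ℝ≥0∞) * (wt e : ℝ≥0∞) <
                wdist (SimpleGraph.fromEdgeSet (S \ (F : Set (Sym2 V)))) wt x y
        then insert e S else S)

namespace FTGreedyAux

variable {V : Type*}

/-- The weight of a walk. -/
noncomputable def weightW {G : SimpleGraph V} {u v : V} (wt : Sym2 V → ℝ≥0) (p : G.Walk u v) : ℝ≥0∞ :=
  (p.edges.map (fun e => (wt e : ℝ≥0∞))).sum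

lemma wdist_le {G : SimpleGraph V} (wt : Sym2 V → ℝ≥0) {u v : V} (p : G.Walk u v) :
    wdist G wt u v ≤ weightW wt p := by
  rw [wdist]; exact iInf_le _ p

lemma weightW_reverse {G : SimpleGraph V} (wt : Sym2 V → ℝ≥0) {u v : V} (p : G.Walk u v) :
    weightW wt p.reverse = weightW wt p := by
  simp [weightW, List.sum_reverse]

lemma wdist_symm_le {G : SimpleGraph V} (wt : Sym2 V → ℝ≥0) (u v : V) :
    wdist G wt u v ≤ wdist G wt v u := by
  conv_rhs => rw [wdist]
  refine le_iInf fun p => ?_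
  exact (wdist_le wt p.reverse).trans_eq (weightW_reverse wt p)

lemma wdist_symm {G : SimpleGraph V} (wt : Sym2 V → ℝ≥0) (u v : V) :
    wdist G wt u v = wdist G wt v u :=
  le_antisymm (wdist_symm_le wt u v) (wdist_symm_le wt v u)

lemma wdist_mono {G G' : SimpleGraph V} (wt : Sym2 V → ℝ≥0) (h : G ≤ G') (u v : V) :
    wdist G' wt u v ≤ wdist G wt u v := by
  conv_rhs => rw [wdist]
  refine le_iInf fun p => ?_
  have hp : ∀ e ∈ p.edges, e ∈ G'.edgeSet := fun e he =>
    SimpleGraph.edgeSet_mono h (p.edges_subset_edgeSet he)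
  refine (wdist_le wt (p.transfer G' hp)).trans_eq ?_
  simp [weightW, Walk.edges_transfer]

lemma weightW_append {G : SimpleGraph V} (wt : Sym2 V → ℝ≥0) {u v w : V}
    (p : G.Walk u v) (q : G.Walk v w) :
    weightW wt (p.append q) = weightW wt p + weightW wt q := by
  simp [weightW, Walk.edges_append]

lemma wdist_triangle {G : SimpleGraph V} (wt : Sym2 V → ℝ≥0) (u v w : V) :
    wdist G wt u w ≤ wdist G wt u v + wdist G wt v w := by
  conv_rhs => rw [wdist, wdist]
  rw [ENNReal.iInf_add]
  refine le_iInf fun p => ?_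
  rw [ENNReal.add_iInf]
  refine le_iInf fun q => ?_
  exact (wdist_le wt (p.append q)).trans_eq (weightW_append wt p q)

lemma subset_greedy (wt : Sym2 V → ℝ≥0) (f k : ℕ) :
    ∀ (L : List (Sym2 V)) (S : Set (Sym2 V)), S ⊆ greedyEFT wt f k L S
  | [], S => by rw [greedyEFT]
  | e :: L, S => by
    rw [greedyEFT]
    refine subset_trans ?_ (subset_greedy wt f k L _)
    split
    · exact Set.subset_insert _ _
    · exact subset_rfl

lemma greedy_key (wt : Sym2 V → ℝ≥0) (f k : ℕ) :
    ∀ (L : List (Sym2 V)) (S : Set (Sym2 V)) (e : Sym2 V), e ∈ L →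
      e ∈ greedyEFT wt f k L S ∨
      ∃ S' : Set (Sym2 V), S' ⊆ greedyEFT wt f k L S ∧
        ¬ (∃ F : Finset (Sym2 V), F.card ≤ f ∧
            ∀ x y : V, e = s(x, y) →
              ((2 * k - 1 : ℕ) : ℝ≥0∞) * (wt e : ℝ≥0∞) <
                wdist (SimpleGraph.fromEdgeSet (S' \ (F : Set (Sym2 V)))) wt x y)
  | [], S, e, he => absurd he List.not_mem_nil
  | a :: L, S, e, he => by
    rw [greedyEFT]
    rcases List.mem_cons.mp he with rfl | he
    · by_cases hc : ∃ F : Finset (Sym2 V), F.card ≤ f ∧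
          ∀ x y : V, e = s(x, y) →
            ((2 * k - 1 : ℕ) : ℝ≥0∞) * (wt e : ℝ≥0∞) <
              wdist (SimpleGraph.fromEdgeSet (S \ (F : Set (Sym2 V)))) wt x y
      · left
        rw [if_pos hc]
        exact subset_greedy wt f k L _ (Set.mem_insert e S)
      · right
        refine ⟨S, ?_, hc⟩
        refine subset_trans ?_ (subset_greedy wt f k L _)
        split
        · exact Set.subset_insert _ _
        · exact subset_rfl
    · exact greedy_key wt f k L _ e he

lemma one_le_coeff {k : ℕ} (hk : 0 < k) : (1 : ℝ≥0∞) ≤ ((2 * k - 1 : ℕ) : ℝ≥0∞) := by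
  have h : (1 : ℕ) ≤ 2 * k - 1 := by omega
  exact_mod_cast h

/-- Key per-edge bound: every edge of the list, not in the fault set `F`, is
`(2k-1)`-approximated in the output minus `F`. -/
lemma edge_bound (wt : Sym2 V → ℝ≥0) (f k : ℕ) (hk : 0 < k) (L : List (Sym2 V))
    (F : Finset (Sym2 V)) (hFcard : F.card ≤ f) {x y : V} (hxy : x ≠ y)
    (heL : s(x, y) ∈ L) (heF : s(x, y) ∉ (F : Set (Sym2 V))) :
    wdist ((SimpleGraph.fromEdgeSet (greedyEFT wt f k L ∅)).deleteEdges (F : Set (Sym2 V)))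
        wt x y ≤ ((2 * k - 1 : ℕ) : ℝ≥0∞) * (wt s(x, y) : ℝ≥0∞) := by
  rcases greedy_key wt f k L ∅ s(x, y) heL with hmem | ⟨S', hS', hnc⟩
  · have hadj : ((SimpleGraph.fromEdgeSet (greedyEFT wt f k L ∅)).deleteEdges
        (F : Set (Sym2 V))).Adj x y := by
      rw [SimpleGraph.deleteEdges_adj, SimpleGraph.fromEdgeSet_adj]
      exact ⟨⟨hmem, hxy⟩, heF⟩
    calc wdist _ wt x y ≤ weightW wt (Walk.cons hadj Walk.nil) := wdist_le wt _
      _ = (wt s(x, y) : ℝ≥0∞) := by simp [weightW]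
      _ ≤ _ := le_mul_of_one_le_left (by positivity) (one_le_coeff hk)
  · push_neg at hnc
    obtain ⟨x', y', hxy', hle⟩ := hnc F hFcard
    have hmono : SimpleGraph.fromEdgeSet (S' \ (F : Set (Sym2 V))) ≤
        (SimpleGraph.fromEdgeSet (greedyEFT wt f k L ∅)).deleteEdges (F : Set (Sym2 V)) := by
      intro a b hab
      rw [SimpleGraph.fromEdgeSet_adj] at hab
      rw [SimpleGraph.deleteEdges_adj, SimpleGraph.fromEdgeSet_adj]
      exact ⟨⟨hS' hab.1.1, hab.2⟩, hab.1.2⟩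
    have h1 : wdist (SimpleGraph.fromEdgeSet (S' \ (F : Set (Sym2 V)))) wt x y ≤
        ((2 * k - 1 : ℕ) : ℝ≥0∞) * (wt s(x, y) : ℝ≥0∞) := by
      rcases Sym2.eq_iff.mp hxy' with ⟨rfl, rfl⟩ | ⟨rfl, rfl⟩
      · exact hle
      · rw [wdist_symm]; exact hle
    exact (wdist_mono wt hmono x y).trans h1

end FTGreedyAux

open FTGreedyAux in
/-- The graph `H` output by the FT-greedy algorithm is an `f`-edge-fault-tolerant
`(2k-1)`-spanner of `G`: for every fault set `F ⊆ E(G)` with `|F| ≤ f` and all vertices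
`u, v`, `d_{H∖F}(u,v) ≤ (2k-1)·d_{G∖F}(u,v)`. -/
theorem stmt_12 {V : Type*} [Fintype V] [DecidableEq V]
    (G : SimpleGraph V) (wt : Sym2 V → ℝ≥0)
    (f k : ℕ) (hf : 0 < f) (hk : 0 < k)
    (L : List (Sym2 V)) (hL : ∀ e, e ∈ L ↔ e ∈ G.edgeSet) (hLnd : L.Nodup)
    (hsort : L.Pairwise (fun a b => wt a ≤ wt b))
    (H : SimpleGraph V) (hH : H = SimpleGraph.fromEdgeSet (greedyEFT wt f k L ∅)) :
    ∀ F : Finset (Sym2 V), (F : Set (Sym2 V)) ⊆ G.edgeSet → F.card ≤ f →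
      ∀ u v : V,
        wdist (H.deleteEdges (F : Set (Sym2 V))) wt u v ≤
          ((2 * k - 1 : ℕ) : ℝ≥0∞) * wdist (G.deleteEdges (F : Set (Sym2 V))) wt u v := by
  intro F hFsub hFcard u v
  subst hH
  have hc0 : ((2 * k - 1 : ℕ) : ℝ≥0∞) ≠ 0 := by
    exact_mod_cast (by omega : 2 * k - 1 ≠ 0)
  have hctop : ((2 * k - 1 : ℕ) : ℝ≥0∞) ≠ ⊤ := ENNReal.natCast_ne_top _
  have key : ∀ {a b : V} (p : (G.deleteEdges (F : Set (Sym2 V))).Walk a b),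
      wdist ((SimpleGraph.fromEdgeSet (greedyEFT wt f k L ∅)).deleteEdges
          (F : Set (Sym2 V))) wt a b ≤
        ((2 * k - 1 : ℕ) : ℝ≥0∞) * weightW wt p := by
    intro a b p
    induction p with
    | nil =>
      refine (wdist_le wt Walk.nil).trans ?_
      simp [weightW]
    | @cons a x b h q ih =>
      have h' : G.Adj a x ∧ s(a, x) ∉ (F : Set (Sym2 V)) := by
        simpa using h
      have h1 : wdist ((SimpleGraph.fromEdgeSet (greedyEFT wt f k L ∅)).deleteEdges
          (F : Set (Sym2 V))) wt a x ≤
          ((2 * k - 1 : ℕ) : ℝ≥0∞) * (wt s(a, x) : ℝ≥0∞) :=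
        edge_bound wt f k hk L F hFcard h'.1.ne ((hL _).mpr h'.1) h'.2
      calc wdist _ wt a b ≤ wdist _ wt a x + wdist _ wt x b := wdist_triangle wt a x b
        _ ≤ ((2 * k - 1 : ℕ) : ℝ≥0∞) * (wt s(a, x) : ℝ≥0∞) +
            ((2 * k - 1 : ℕ) : ℝ≥0∞) * weightW wt q := add_le_add h1 ih
        _ = ((2 * k - 1 : ℕ) : ℝ≥0∞) * weightW wt (Walk.cons h q) := by
            rw [← mul_add]
            congr 1
  have hle : wdist ((SimpleGraph.fromEdgeSet (greedyEFT wt f k L ∅)).deleteEdges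
      (F : Set (Sym2 V))) wt u v ≤
      ⨅ p : (G.deleteEdges (F : Set (Sym2 V))).Walk u v,
        ((2 * k - 1 : ℕ) : ℝ≥0∞) * weightW wt p :=
    le_iInf fun p => key p
  refine hle.trans (le_of_eq ?_)
  rw [wdist]
  exact (ENNReal.mul_iInf_of_ne hc0 hctop).symm
end

section
/- In the Ree-Tits octagon incidence graph construction: if R is a bipartite graph of girth greater than 15, and G is obtained from R by replacing each vertex v with a set of copies and each edge (u,v) with all edges between copies of u and copies of v, then for any edge (u_i, v_j) of G, letting F be the set of all other copies of the edge (u,v), the graph G∖F contains no cycle of length at most 15 through the edge (u_i, v_j). -/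
open SimpleGraph

/-- Blow-up construction: if `R` is bipartite with girth `> 15` and `G` is the blow-up of
`R` (vertex `a` replaced by the copies `ι a`, with all edges between copies of adjacent
vertices), then after deleting all copies of the edge `(u,v)` except `(u_i, v_j)`, no
cycle of length at most `15` passes through the edge `(u_i, v_j)`. -/
theorem stmt_14 {A : Type*} (R : SimpleGraph A) (hbip : R.Colorable 2)
    (hgirth : ∀ (a : A) (C : R.Walk a a), C.IsCycle → 15 < C.length)
    (ι : A → Type*) (hne : ∀ a, Nonempty (ι a))
    (u v : A) (huv : R.Adj u v) (i : ι u) (j : ι v) :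
    ∀ (x : Σ a, ι a)
      (C : ((R.comap (Sigma.fst : (Σ a, ι a) → A)).deleteEdges
          ({e : Sym2 (Σ a, ι a) | Sym2.map Sigma.fst e = s(u, v)} \
            {s((⟨u, i⟩ : Σ a, ι a), (⟨v, j⟩ : Σ a, ι a))})).Walk x x),
      C.IsCycle → s((⟨u, i⟩ : Σ a, ι a), (⟨v, j⟩ : Σ a, ι a)) ∈ C.edges →
      15 < C.length := by
  classical
  set G : SimpleGraph (Σ a, ι a) := (R.comap (Sigma.fst : (Σ a, ι a) → A)).deleteEdges
      ({e : Sym2 (Σ a, ι a) | Sym2.map Sigma.fst e = s(u, v)} \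
        {s((⟨u, i⟩ : Σ a, ι a), (⟨v, j⟩ : Σ a, ι a))}) with hGdef
  set a₀ : Σ a, ι a := ⟨u, i⟩ with ha₀
  set b₀ : Σ a, ι a := ⟨v, j⟩ with hb₀
  have hune : u ≠ v := huv.ne
  have hab : a₀ ≠ b₀ := fun h => hune (congrArg Sigma.fst h)
  -- the projection homomorphism
  have hGadj : ∀ {a b : Σ a, ι a}, G.Adj a b → R.Adj a.1 b.1 := by
    intro a b h
    rw [hGdef, deleteEdges_adj, comap_adj] at h
    exact h.1
  let φ : G →g R := ⟨Sigma.fst, fun h => hGadj h⟩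
  -- projected walks avoiding s(a₀, b₀) avoid s(u,v)
  have hproj : ∀ {a b : Σ a, ι a} (p : G.Walk a b), s(a₀, b₀) ∉ p.edges →
      s(u, v) ∉ (p.map φ).edges := by
    intro a b p hp hmem
    rw [Walk.edges_map] at hmem
    obtain ⟨f, hf, hmap⟩ := List.mem_map.mp hmem
    have hfe : f ∈ G.edgeSet := p.edges_subset_edgeSet hf
    rw [hGdef, edgeSet_deleteEdges] at hfe
    have hfeq : f = s(a₀, b₀) := by
      by_contra hne'
      exact hfe.2 ⟨hmap, hne'⟩
    exact hp (hfeq ▸ hf)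
  -- key: any walk in G from b₀ to a₀ avoiding s(a₀,b₀) has length > 14
  have key : ∀ (W : G.Walk b₀ a₀), s(a₀, b₀) ∉ W.edges → 15 < W.length + 1 := by
    intro W hW
    have hq : s(u, v) ∉ (W.map φ).edges := hproj W hW
    have hbp : s(u, v) ∉ (W.map φ).bypass.edges :=
      fun h => hq ((W.map φ).edges_bypass_subset h)
    have hcyc : (Walk.cons huv (W.map φ).bypass).IsCycle :=
      (Walk.cons_isCycle_iff _ huv).mpr ⟨(W.map φ).bypass_isPath, hbp⟩
    have hg := hgirth u _ hcyc
    simp only [Walk.length_cons] at hg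
    have hle : (W.map φ).bypass.length ≤ W.length := by
      calc (W.map φ).bypass.length ≤ (W.map φ).length := (W.map φ).length_bypass_le
        _ = W.length := Walk.length_map φ W
    omega
  intro x C hC hmem
  have hx : a₀ ∈ C.support := C.fst_mem_support_of_mem_edges hmem
  have hD : (C.rotate a₀ hx).IsCycle := hC.rotate hx
  have hDe : s(a₀, b₀) ∈ (C.rotate a₀ hx).edges := ((C.rotate_edges a₀ hx).mem_iff).mpr hmem
  have hDlen : (C.rotate a₀ hx).length = C.length := by
    have hh := (C.rotate_edges a₀ hx).perm.length_eq
    rw [Walk.length_edges, Walk.length_edges] at hh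
    exact hh
  rw [← hDlen]
  revert hD hDe
  generalize C.rotate a₀ hx = D
  intro hD hDe
  cases D with
  | nil => exact absurd hD (by simp [Walk.isCycle_def])
  | cons h p =>
    rw [Walk.cons_isCycle_iff] at hD
    obtain ⟨hpath, hfirst⟩ := hD
    rename_i w
    have hDe' : s(a₀, b₀) = s(a₀, w) ∨ s(a₀, b₀) ∈ p.edges := by
      simpa [Walk.edges_cons] using hDe
    rcases hDe' with hcase | hcase
    · -- s(a₀,b₀) is the first edge
      have hw : w = b₀ := by
        rcases Sym2.eq_iff.mp hcase with ⟨_, h2⟩ | ⟨_, h2⟩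
        · exact h2.symm
        · exact absurd h2.symm hab
      subst hw
      have hlen := key p (hcase ▸ hfirst)
      simpa using hlen
    · -- s(a₀,b₀) is inside p; it must be the last edge of p
      have hne2 : s(a₀, b₀) ≠ s(a₀, w) := fun hh => hfirst (hh ▸ hcase)
      have hwne : w ≠ b₀ := fun hh => hne2 (by rw [hh])
      -- analyze p.reverse : Walk a₀ w
      have hrpath : p.reverse.IsPath := hpath.reverse
      have hre : s(a₀, b₀) ∈ p.reverse.edges := by
        rw [Walk.edges_reverse, List.mem_reverse]; exact hcase
      obtain ⟨p', hp'ne, hp'len⟩ :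
          ∃ p' : G.Walk b₀ w, s(a₀, b₀) ∉ p'.edges ∧ p'.length + 1 = p.length := by
        cases hrev : p.reverse with
        | nil => rw [hrev] at hre; simp at hre
        | cons h'' p'' =>
          rename_i w'
          rw [hrev] at hrpath hre
          rw [Walk.cons_isPath_iff] at hrpath
          have hre' : s(a₀, b₀) = s(a₀, w') ∨ s(a₀, b₀) ∈ p''.edges := by
            simpa [Walk.edges_cons] using hre
          rcases hre' with hc2 | hc2
          · have hw' : w' = b₀ := by
              rcases Sym2.eq_iff.mp hc2 with ⟨_, h2⟩ | ⟨_, h2⟩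
              · exact h2.symm
              · exact absurd h2.symm hab
            subst hw'
            refine ⟨p'', ?_, ?_⟩
            · exact fun hh => hrpath.2 (p''.fst_mem_support_of_mem_edges hh)
            · have hl : p.reverse.length = p.length := p.length_reverse
              rw [hrev] at hl
              simpa using hl
          · exact absurd (p''.fst_mem_support_of_mem_edges hc2) hrpath.2
      -- extend p' by the edge (w, a₀)
      have hW : s(a₀, b₀) ∉ (p'.append h.symm.toWalk).edges := by
        rw [Walk.edges_append]
        intro hh
        rcases List.mem_append.mp hh with hh' | hh'
        · exact hp'ne hh'
        · have heq : s(a₀, b₀) = s(w, a₀) := by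
            simpa [SimpleGraph.Adj.toWalk] using hh'
          rcases Sym2.eq_iff.mp heq with ⟨_, h2⟩ | ⟨_, h2⟩
          · exact hab h2.symm
          · exact hwne h2.symm
      have hlen := key (p'.append h.symm.toWalk) hW
      rw [Walk.length_append] at hlen
      simp only [Walk.length_cons]
      have htw : (SimpleGraph.Adj.toWalk h.symm).length = 1 := rfl
      omega
end
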